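/- For $k \ge 0$, $V_k(1/2,1/2) = 4^k$, where $V_k(\alpha,\beta) = \sum_{i=0}^{k}\sum_{j=0}^{k-i} C^{k-1}_{k-i-j}\alpha^{-i}\beta^{-j}$. -/

import Mathlib

open Finset

/-- Ballot numbers `C^n_k = C(n+k, n) - C(n+k, n+1)` (with `C^{-1}_0 = 1`,
as given by the truncated subtraction in the index `k - 1` below). -/
def ballot (n k : ℕ) : ℕ := (n + k).choose n - (n + k).choose (n + 1)

/-- `V_k(α,β) = ∑_{i=0}^k ∑_{j=0}^{k-i} C^{k-1}_{k-i-j} α^{-i} β^{-j}`. -/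
def V (k : ℕ) (α β : ℚ) : ℚ :=
  ∑ i ∈ Finset.range (k + 1), ∑ j ∈ Finset.range (k - i + 1),
    (ballot (k - 1) (k - i - j) : ℚ) * α⁻¹ ^ i * β⁻¹ ^ j

/-- Rational (non-truncated) ballot numbers. -/
def bq (n m : ℕ) : ℚ := ((n + m).choose n : ℚ) - ((n + m).choose (n + 1) : ℚ)

lemma bq_zero (n : ℕ) : bq n 0 = 1 := by
  simp [bq, Nat.choose_self, Nat.choose_succ_self]

lemma bq_rec (n m : ℕ) : bq (n+1) (m+1) = bq n (m+1) + bq (n+1) m := by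
  unfold bq
  rw [show (n+1)+(m+1) = (n+(m+1))+1 from by ring,
      show (n+1)+m = n+(m+1) from by ring,
      Nat.choose_succ_succ (n+(m+1)) n,
      Nat.choose_succ_succ (n+(m+1)) (n+1)]
  push_cast
  ring

lemma bq_top (n : ℕ) : bq (n+1) (n+2) = 0 := by
  unfold bq
  have h : ((n+1)+(n+2)).choose ((n+1)+1) = ((n+1)+(n+2)).choose (n+1) := by
    rw [← Nat.choose_symm (show (n+1)+1 ≤ (n+1)+(n+2) by omega)]
    congr 1
    omega
  rw [h]
  ring

lemma ballot_cast (n m : ℕ) (h : m ≤ n + 1) : (ballot n m : ℚ) = bq n m := by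
  unfold ballot bq
  have h1 := Nat.choose_succ_right_eq (n+m) n
  have h2 : n + m - n = m := by omega
  rw [h2] at h1
  have hle : (n+m).choose (n+1) ≤ (n+m).choose n := by
    have hm : (n+m).choose (n+1) * (n+1) ≤ (n+m).choose n * (n+1) := by
      rw [h1]
      exact Nat.mul_le_mul_left _ h
    exact Nat.le_of_mul_le_mul_right hm (by omega)
  rw [Nat.cast_sub hle]

lemma key (n : ℕ) (c : ℕ → ℚ) :
    ∑ m ∈ range (n+3), c m * (2:ℚ)⁻¹^m * bq (n+1) m
      = ∑ m ∈ range (n+3), c m * (2:ℚ)⁻¹^m * bq n m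
        + (2:ℚ)⁻¹ * ∑ m ∈ range (n+2), c (m+1) * (2:ℚ)⁻¹^m * bq (n+1) m := by
  rw [Finset.sum_range_succ' (fun m => c m * (2:ℚ)⁻¹^m * bq (n+1) m) (n+2),
      Finset.sum_range_succ' (fun m => c m * (2:ℚ)⁻¹^m * bq n m) (n+2)]
  have hs : ∑ m ∈ range (n+2), c (m+1) * (2:ℚ)⁻¹^(m+1) * bq (n+1) (m+1)
      = ∑ m ∈ range (n+2), (c (m+1) * (2:ℚ)⁻¹^(m+1) * bq n (m+1)
          + (2:ℚ)⁻¹ * (c (m+1) * (2:ℚ)⁻¹^m * bq (n+1) m)) := by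
    apply Finset.sum_congr rfl
    intro m _
    rw [bq_rec]
    ring
  rw [hs, Finset.sum_add_distrib, ← Finset.mul_sum, bq_zero, bq_zero]
  ring

def Rs (n : ℕ) : ℚ := ∑ m ∈ range (n+2), (2:ℚ)⁻¹ ^ m * bq n m

def Gs (n : ℕ) : ℚ := ∑ m ∈ range (n+2), ((n:ℚ) + 2 - m) * (2:ℚ)⁻¹ ^ m * bq n m

lemma Rs_succ (n : ℕ) :
    Rs (n+1) = 2 * Rs n + 2 * (2:ℚ)⁻¹^(n+2) * bq n (n+2) := by
  have h := key n (fun _ => 1)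
  simp only [one_mul] at h
  have h1 : Rs (n+1) = ∑ m ∈ range (n+3), (2:ℚ)⁻¹^m * bq (n+1) m := rfl
  have h2 : ∑ m ∈ range (n+3), (2:ℚ)⁻¹^m * bq n m
      = Rs n + (2:ℚ)⁻¹^(n+2) * bq n (n+2) := by
    rw [Finset.sum_range_succ]
    rfl
  have h3 : ∑ m ∈ range (n+3), (2:ℚ)⁻¹^m * bq (n+1) m
      = ∑ m ∈ range (n+2), (2:ℚ)⁻¹^m * bq (n+1) m := by
    rw [Finset.sum_range_succ (fun m => (2:ℚ)⁻¹^m * bq (n+1) m) (n+2), bq_top]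
    ring
  have e : Rs (n+1) = (Rs n + (2:ℚ)⁻¹^(n+2) * bq n (n+2)) + (2:ℚ)⁻¹ * Rs (n+1) := by
    conv_lhs => rw [h1, h, h2]
    rw [← h3, ← h1]
  have h4 : (2:ℚ)⁻¹ = 1/2 := by norm_num
  rw [h4] at e ⊢
  linarith

lemma Gs_succ (n : ℕ) : Gs (n+1) = 2 * Gs n := by
  have hkey := key n (fun m => (n:ℚ) + 3 - m)
  have hGs1 : Gs (n+1) = ∑ m ∈ range (n+3), ((n:ℚ) + 3 - m) * (2:ℚ)⁻¹^m * bq (n+1) m := by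
    unfold Gs
    apply Finset.sum_congr rfl
    intro m _
    push_cast
    ring
  have hP : ∑ m ∈ range (n+3), ((n:ℚ) + 3 - m) * (2:ℚ)⁻¹^m * bq n m
      = Gs n + Rs n + (2:ℚ)⁻¹^(n+2) * bq n (n+2) := by
    rw [Finset.sum_range_succ]
    have hsplit : ∑ m ∈ range (n+2), ((n:ℚ) + 3 - m) * (2:ℚ)⁻¹^m * bq n m
        = Gs n + Rs n := by
      unfold Gs Rs
      rw [← Finset.sum_add_distrib]
      apply Finset.sum_congr rfl
      intro m _
      ring
    rw [hsplit]
    push_cast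
    ring
  have hQ : ∑ m ∈ range (n+2), ((n:ℚ) + 3 - ((m:ℕ)+1 : ℕ)) * (2:ℚ)⁻¹^m * bq (n+1) m
      = ∑ m ∈ range (n+2), ((n:ℚ) + 2 - m) * (2:ℚ)⁻¹^m * bq (n+1) m := by
    apply Finset.sum_congr rfl
    intro m _
    push_cast
    ring
  have hB : ∑ m ∈ range (n+2), ((n:ℚ) + 2 - m) * (2:ℚ)⁻¹^m * bq (n+1) m
      = Gs (n+1) - Rs (n+1) := by
    have hA : Rs (n+1) = ∑ m ∈ range (n+2), (2:ℚ)⁻¹^m * bq (n+1) m := by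
      have h1 : Rs (n+1) = ∑ m ∈ range (n+3), (2:ℚ)⁻¹^m * bq (n+1) m := rfl
      rw [h1, Finset.sum_range_succ, bq_top]
      ring
    have hGsBA : Gs (n+1)
        = (∑ m ∈ range (n+2), ((n:ℚ) + 2 - m) * (2:ℚ)⁻¹^m * bq (n+1) m)
          + ∑ m ∈ range (n+2), (2:ℚ)⁻¹^m * bq (n+1) m := by
      rw [hGs1, Finset.sum_range_succ, bq_top, ← Finset.sum_add_distrib]
      have hc : ∀ m ∈ range (n+2),
          ((n:ℚ) + 3 - m) * (2:ℚ)⁻¹^m * bq (n+1) m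
            = ((n:ℚ) + 2 - m) * (2:ℚ)⁻¹^m * bq (n+1) m + (2:ℚ)⁻¹^m * bq (n+1) m := by
        intro m _
        ring
      rw [Finset.sum_congr rfl hc]
      ring
    rw [hGsBA, hA]
    ring
  rw [hP, hQ, hB, ← hGs1] at hkey
  have hmain := hkey
  have hRs := Rs_succ n
  have h4 : (2:ℚ)⁻¹ = 1/2 := by norm_num
  rw [h4] at hmain hRs
  linarith

lemma Gs_eq (n : ℕ) : Gs n = 2^(n+1) := by
  induction n with
  | zero =>
    unfold Gs
    rw [Finset.sum_range_succ, Finset.sum_range_succ, Finset.sum_range_zero]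
    simp [bq]
  | succ n ih =>
    rw [Gs_succ, ih]
    ring

lemma sum_tri (F : ℕ → ℚ) (n : ℕ) :
    ∑ i ∈ range (n+1), ∑ j ∈ range (n - i + 1), F (i+j)
      = ∑ t ∈ range (n+1), ((t:ℚ)+1) * F t := by
  induction n with
  | zero => simp
  | succ n ih =>
    have h1 : ∀ i ∈ range (n+2), ∑ j ∈ range (n+1-i+1), F (i+j)
        = (∑ j ∈ range (n+1-i), F (i+j)) + F (n+1) := by
      intro i hi
      have hi' : i < n+2 := Finset.mem_range.mp hi
      rw [Finset.sum_range_succ, show i + (n+1-i) = n+1 from by omega]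
    rw [Finset.sum_congr rfl h1, Finset.sum_add_distrib, Finset.sum_const,
        Finset.card_range]
    have h2 : ∑ i ∈ range (n+2), ∑ j ∈ range (n+1-i), F (i+j)
        = ∑ i ∈ range (n+1), ∑ j ∈ range (n-i+1), F (i+j) := by
      rw [Finset.sum_range_succ, show n+1-(n+1) = 0 from by omega,
          Finset.sum_range_zero, add_zero]
      apply Finset.sum_congr rfl
      intro i hi
      have hi' : i < n+1 := Finset.mem_range.mp hi
      rw [show n+1-i = n-i+1 from by omega]
    rw [h2, ih, Finset.sum_range_succ (fun t => ((t:ℚ)+1) * F t) (n+1), nsmul_eq_mul]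
    push_cast
    ring

/-- `V_k(1/2, 1/2) = 4^k`. -/
theorem V_half_half (k : ℕ) : V k (1 / 2) (1 / 2) = 4 ^ k := by
  have hV : V k (1/2) (1/2)
      = ∑ i ∈ range (k+1), ∑ j ∈ range (k - i + 1),
          (fun t => (ballot (k-1) (k - t) : ℚ) * 2^t) (i+j) := by
    unfold V
    apply Finset.sum_congr rfl
    intro i _
    apply Finset.sum_congr rfl
    intro j _
    simp only [Nat.sub_sub]
    rw [pow_add]
    norm_num
    ring
  rw [hV, sum_tri (fun t => (ballot (k-1) (k - t) : ℚ) * 2^t) k]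
  cases k with
  | zero =>
    simp [ballot]
  | succ n =>
    have hrefl := Finset.sum_range_reflect
      (fun t => ((t:ℚ)+1) * ((ballot (n+1-1) (n+1 - t) : ℚ) * 2^t)) (n+2)
    rw [← hrefl]
    have hterm : ∀ m ∈ range (n+2),
        ((((n+2-1-m : ℕ)):ℚ)+1) * ((ballot (n+1-1) (n+1 - (n+2-1-m)) : ℚ) * 2^(n+2-1-m))
          = (((n:ℚ) + 2 - m) * (2:ℚ)⁻¹^m * bq n m) * 2^(n+1) := by
      intro m hm
      have hm' : m ≤ n+1 := by
        have := Finset.mem_range.mp hm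
        omega
      rw [show n+2-1-m = n+1-m from by omega,
          show n+1-(n+1-m) = m from by omega,
          show n+1-1 = n from by omega,
          ballot_cast n m hm']
      have hcast : ((n+1-m : ℕ) : ℚ) = (n:ℚ) + 1 - m := by
        rw [Nat.cast_sub (by omega)]
        push_cast
        ring
      have hpow : (2:ℚ)^(n+1-m) = (2:ℚ)⁻¹^m * 2^(n+1) := by
        have hmul : (2:ℚ)^(n+1-m) * 2^m = 2^(n+1) := by
          rw [← pow_add]
          congr 1
          omega
        have h2m : ((2:ℚ)^m) ≠ 0 := by positivity
        rw [inv_pow, eq_inv_mul_iff_mul_eq₀ h2m, mul_comm]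
        exact hmul
      rw [hcast, hpow]
      ring
    rw [Finset.sum_congr rfl hterm, ← Finset.sum_mul]
    have : (∑ m ∈ range (n+2), ((n:ℚ) + 2 - m) * (2:ℚ)⁻¹^m * bq n m) = Gs n := rfl
    rw [this, Gs_eq, ← pow_add]
    rw [show (2:ℚ) ^ (n + 1 + (n + 1)) = (2^2)^(n+1) from by rw [← pow_mul]; congr 1; omega]
    norm_num
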